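/- The homogeneous polynomial P(x₀,x₁,y₁,x₂) = 3x₁y₁x₂ − (x₂ + x₁ + 3y₁)x₀² ∈ ℝ[x₀,x₁,y₁,x₂] is hyperbolic with respect to the direction (0,1,1,1), and P(x₀,x₁,−x₁,x₂) = 2x₀²x₁ − (x₀² + 3x₁²)x₂ for all x₀, x₁, x₂. -/

import Mathlib

open MvPolynomial Polynomial

/-- The one-variable complex polynomial `t ↦ P(x - t·e)` for `P ∈ ℝ[x₀,…,x_{N-1}]`. -/
noncomputable def linePoly {N : ℕ} (p : MvPolynomial (Fin N) ℝ) (x e : Fin N → ℝ) :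
    Polynomial ℂ :=
  MvPolynomial.aeval (fun i => Polynomial.C (x i : ℂ) - Polynomial.C (e i : ℂ) * Polynomial.X) p

/-- A real multivariate polynomial is hyperbolic with respect to `e` if `p(e) ≠ 0` and for
every real `x` the one-variable polynomial `t ↦ p(x - t e)` has only real zeros. -/
def Hyperbolic {N : ℕ} (p : MvPolynomial (Fin N) ℝ) (e : Fin N → ℝ) : Prop :=
  MvPolynomial.eval e p ≠ 0 ∧ ∀ x : Fin N → ℝ, ∀ z ∈ (linePoly p x e).roots, z.im = 0

/-- The lifted polynomial `P(x₀,x₁,y₁,x₂) = 3x₁y₁x₂ − (x₂ + x₁ + 3y₁)x₀²` (with the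
variables ordered as `x₀, x₁, y₁, x₂`). -/
noncomputable def liftedPoly : MvPolynomial (Fin 4) ℝ :=
  3 * X 1 * X 2 * X 3 - (X 3 + X 1 + 3 * X 2) * X 0 ^ 2

set_option maxHeartbeats 1000000 in
/-- The real-arithmetic core: the discriminant certificate showing that the line
polynomial cannot have a nonreal root. -/
lemma key_real (a b c s u v : ℝ) (hs : 0 ≤ s) (hv : v ≠ 0)
    (hA : -9*u^2+3*v^2+6*(a+b+c)*u+(5*s-3*(a*b+a*c+b*c)) = 0)
    (hE : -3*u^3+9*u*v^2+3*(a+b+c)*(u^2-v^2)+(5*s-3*(a*b+a*c+b*c))*u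
        +(3*a*b*c-s*(a+3*b+c)) = 0) : False := by
  have hid : 81*((a-b)*(b-c)*((a-b)+(b-c)))^2
      + s*(27*(2*(a-b)^2+3*(a-b)*(b-c)+2*(b-c)^2)^2 + 297*((a-b)*(b-c))^2)
      + s^2*(558*((a-b)+(b-c))^2+234*(a-b)^2+234*(b-c)^2) + 1500*s^3
      = -324*v^2*((3*u-(a+b+c))^2+v^2)^2 := by
    linear_combination
      (-1944*u^4 + 2592*u^3*a + 2592*u^3*b + 2592*u^3*c + 2268*u^2*v^2 - 702*u^2*a^2
        - 3186*u^2*a*b - 3186*u^2*a*c - 702*u^2*b^2 - 3186*u^2*b*c - 702*u^2*c^2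
        + 2970*u^2*s - 1512*u*v^2*a - 1512*u*v^2*b - 1512*u*v^2*c + 54*u*a^3
        + 621*u*a^2*b + 621*u*a^2*c + 621*u*a*b^2 + 3888*u*a*b*c + 621*u*a*c^2
        - 1494*u*a*s + 54*u*b^3 + 621*u*b^2*c + 621*u*b*c^2 - 2952*u*b*s + 54*u*c^3
        - 1494*u*c*s + 108*v^4 + 216*v^2*a^2 + 540*v^2*a*b + 540*v^2*a*c + 216*v^2*b^2
        + 540*v^2*b*c + 216*v^2*c^2 - 180*v^2*s - 27*a^3*b - 27*a^3*c + 54*a^2*b^2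
        - 648*a^2*b*c + 54*a^2*c^2 + 288*a^2*s - 27*a*b^3 - 648*a*b^2*c - 648*a*b*c^2
        + 702*a*b*s - 27*a*c^3 + 216*a*c*s - 27*b^3*c + 54*b^2*c^2 + 774*b^2*s
        - 27*b*c^3 + 702*b*c*s + 288*c^2*s + 300*s^2) * hA
      + (5832*u^3 - 5832*u^2*a - 5832*u^2*b - 5832*u^2*c + 1458*u*a^2 + 4374*u*a*b
        + 4374*u*a*c + 1458*u*b^2 + 4374*u*b*c + 1458*u*c^2 - 2430*u*s - 108*a^3
        - 567*a^2*b - 567*a^2*c - 567*a*b^2 - 2106*a*b*c - 567*a*c^2 + 648*a*s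
        - 108*b^3 - 567*b^2*c - 567*b*c^2 + 1134*b*s - 108*c^3 + 648*c*s) * hE
  have hpos : (0:ℝ) ≤ 81*((a-b)*(b-c)*((a-b)+(b-c)))^2
      + s*(27*(2*(a-b)^2+3*(a-b)*(b-c)+2*(b-c)^2)^2 + 297*((a-b)*(b-c))^2)
      + s^2*(558*((a-b)+(b-c))^2+234*(a-b)^2+234*(b-c)^2) + 1500*s^3 := by
    have h1 : (0:ℝ) ≤ s^3 := pow_nonneg hs 3
    have h2 : (0:ℝ) ≤ s * (27*(2*(a-b)^2+3*(a-b)*(b-c)+2*(b-c)^2)^2 + 297*((a-b)*(b-c))^2) :=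
      mul_nonneg hs (by positivity)
    have h3 : (0:ℝ) ≤ s^2*(558*((a-b)+(b-c))^2+234*(a-b)^2+234*(b-c)^2) := by positivity
    have h0 : (0:ℝ) ≤ 81*((a-b)*(b-c)*((a-b)+(b-c)))^2 := by positivity
    linarith
  have hv2 : (0:ℝ) < v^2 := by positivity
  have hW : (0:ℝ) < (3*u-(a+b+c))^2+v^2 := by positivity
  have hneg : -324*v^2*((3*u-(a+b+c))^2+v^2)^2 < 0 := by
    have := mul_pos hv2 (pow_pos hW 2)
    nlinarith [this]
  linarith [hid ▸ hpos]

/-- **Example (lift).** The homogeneous polynomial `P(x₀,x₁,y₁,x₂) = 3x₁y₁x₂ − (x₂+x₁+3y₁)x₀²`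
is hyperbolic with respect to `(0,1,1,1)`, and `P(x₀,x₁,−x₁,x₂) = 2x₀²x₁ − (x₀²+3x₁²)x₂`. -/
theorem liftedPoly_hyperbolic_and_restricts :
    liftedPoly.IsHomogeneous 3 ∧
    Hyperbolic liftedPoly ![0, 1, 1, 1] ∧
    ∀ x₀ x₁ x₂ : ℝ,
      MvPolynomial.eval ![x₀, x₁, -x₁, x₂] liftedPoly =
        2 * x₀ ^ 2 * x₁ - (x₀ ^ 2 + 3 * x₁ ^ 2) * x₂ := by
  refine ⟨?_, ⟨?_, ?_⟩, ?_⟩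
  · -- homogeneity
    have h1 : (X 1 : MvPolynomial (Fin 4) ℝ).IsHomogeneous 1 := isHomogeneous_X _ _
    have h2 : (X 2 : MvPolynomial (Fin 4) ℝ).IsHomogeneous 1 := isHomogeneous_X _ _
    have h3 : (X 3 : MvPolynomial (Fin 4) ℝ).IsHomogeneous 1 := isHomogeneous_X _ _
    have h0 : (X 0 : MvPolynomial (Fin 4) ℝ).IsHomogeneous 1 := isHomogeneous_X _ _
    have hC : (3 : MvPolynomial (Fin 4) ℝ).IsHomogeneous 0 := by
      convert isHomogeneous_C (Fin 4) (3 : ℝ) using 1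
      exact (map_ofNat (MvPolynomial.C) 3).symm
    unfold liftedPoly
    exact (((hC.mul h1).mul h2).mul h3).sub
      (((h3.add h1).add (hC.mul h2)).mul (h0.pow 2))
  · -- P(e) ≠ 0
    simp [liftedPoly]
  · -- all roots of the line polynomial are real
    intro x z hz
    have hroot : Polynomial.eval z (linePoly liftedPoly x ![0, 1, 1, 1]) = 0 :=
      (Polynomial.mem_roots'.mp hz).2
    have h : 3*((x 1:ℂ) - z)*((x 2:ℂ) - z)*((x 3:ℂ) - z)
        - (((x 3:ℂ) - z) + ((x 1:ℂ) - z) + 3*((x 2:ℂ) - z))*((x 0:ℂ)*(x 0:ℂ)) = 0 := by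
      simp [linePoly, liftedPoly] at hroot
      linear_combination hroot
    by_contra hv
    set a := x 1; set b := x 2; set c := x 3
    set u := z.re; set v := z.im
    have hzuv : z = (u : ℂ) + (v : ℂ) * Complex.I := (Complex.re_add_im z).symm
    rw [hzuv] at h
    have hre := congrArg Complex.re h
    have him := congrArg Complex.im h
    simp only [Complex.add_re, Complex.add_im, Complex.sub_re, Complex.sub_im,
      Complex.mul_re, Complex.mul_im, Complex.ofReal_re, Complex.ofReal_im,
      Complex.I_re, Complex.I_im, Complex.zero_re, Complex.zero_im,
      Complex.re_ofNat, Complex.im_ofNat] at hre him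
    have hA : -9*u^2+3*v^2+6*(a+b+c)*u+(5*(x 0*x 0)-3*(a*b+a*c+b*c)) = 0 := by
      apply mul_left_cancel₀ hv
      rw [mul_zero]
      linear_combination him
    have hE : -3*u^3+9*u*v^2+3*(a+b+c)*(u^2-v^2)+(5*(x 0*x 0)-3*(a*b+a*c+b*c))*u
        +(3*a*b*c-(x 0*x 0)*(a+3*b+c)) = 0 := by
      linear_combination hre
    exact key_real a b c (x 0 * x 0) u v (mul_self_nonneg _) hv hA hE
  · -- restriction
    intro x₀ x₁ x₂
    simp [liftedPoly]
    ring
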